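/- arXiv:2401.14138 — 2 statements merged into one kernel-verified Lean document; each statement's English description precedes it below -/
import Mathlib

section
/- Let n ≥ 1. If n ≡ 0, 2, or 3 (mod 4), or if n ≡ 1 (mod 4) and n = p^e for some prime p and some odd positive integer e, then the discriminant of F_n(x) is not the square of a rational number. -/
open Polynomial BigOperators

/-- `F n` is the truncated logarithmic polynomial `1 + x + x²/2 + ⋯ + xⁿ/n ∈ ℚ[x]`. -/
noncomputable def F (n : ℕ) : Polynomial ℚ :=
  1 + ∑ k ∈ Finset.Icc 1 n, Polynomial.C ((k : ℚ)⁻¹) * Polynomial.X ^ k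

/-- `Ln n = lcm {1, 2, …, n}`. -/
def Ln (n : ℕ) : ℕ := (Finset.Icc 1 n).lcm id

/-- `Ftilde n = Ln n • F n`, a polynomial with integer coefficients. -/
noncomputable def Ftilde (n : ℕ) : Polynomial ℚ := Polynomial.C ((Ln n : ℚ)) * F n

/-- The resultant `Res(P, Q)` of two polynomials over `ℚ`, computed in `ℂ` via the
product formula `Res(P,Q) = lc(P)^(deg Q) * ∏_{P(r)=0} Q(r)` (roots with multiplicity). -/
noncomputable def resC (P Q : Polynomial ℚ) : ℂ :=
  ((P.leadingCoeff : ℂ)) ^ Q.natDegree *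
    ((P.map (algebraMap ℚ ℂ)).roots.map (fun r => (Q.map (algebraMap ℚ ℂ)).eval r)).prod

/-- The discriminant `disc P = (−1)^(n(n−1)/2) ⬝ a_n⁻¹ ⬝ Res(P, P′)`, as a complex number. -/
noncomputable def discC (P : Polynomial ℚ) : ℂ :=
  (-1) ^ (P.natDegree.choose 2) * ((P.leadingCoeff : ℂ))⁻¹ * resC P (Polynomial.derivative P)

/-- `𝒫 n = ∏_θ F̃_n(θ)`, the product over the nontrivial `n`-th roots of unity in `ℂ`. -/
noncomputable def P (n : ℕ) : ℂ :=
  ∏ θ ∈ (Polynomial.nthRootsFinset n (1 : ℂ)).erase 1, (Polynomial.aeval θ) (Ftilde n)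

/-- `Xc m ω = ∏_{k=1}^{m−1} (1/m + ω^k + ω^{2k}/2 + ⋯ + ω^{(m−1)k}/(m−1))`. -/
noncomputable def Xc (m : ℕ) (ω : ℂ) : ℂ :=
  ∏ k ∈ Finset.Icc 1 (m - 1), ((m : ℂ)⁻¹ + ∑ j ∈ Finset.Icc 1 (m - 1), ω ^ (j * k) / (j : ℂ))

/-- `Y m = 1 + 1/2 + ⋯ + 1/m ∈ ℚ`. -/
def Y (m : ℕ) : ℚ := ∑ j ∈ Finset.Icc 1 m, (j : ℚ)⁻¹

noncomputable def sroots (n : ℕ) : Finset ℂ := (Polynomial.nthRootsFinset n (1 : ℂ)).erase 1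


lemma F_coeff_n {n : ℕ} (hn : 1 ≤ n) : (F n).coeff n = (n : ℚ)⁻¹ := by
  rw [F, coeff_add, Polynomial.coeff_one, if_neg (by omega), zero_add,
    Polynomial.finset_sum_coeff]
  rw [Finset.sum_eq_single n]
  · simp
  · intro k hk hkn
    simp only [coeff_C_mul, coeff_X_pow]
    rw [if_neg (by omega)]
    ring
  · intro h
    exact absurd (Finset.mem_Icc.2 ⟨hn, le_rfl⟩) h

lemma F_natDegree {n : ℕ} (hn : 1 ≤ n) : (F n).natDegree = n := by
  apply le_antisymm
  · rw [F]
    apply le_trans (Polynomial.natDegree_add_le _ _)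
    apply max_le (by simpa using hn)
    apply le_trans (Polynomial.natDegree_sum_le _ _)
    apply Finset.sup_le
    intro k hk
    simp only [Function.comp_apply]
    exact le_trans (Polynomial.natDegree_C_mul_le _ _)
      (le_trans (Polynomial.natDegree_X_pow_le k) (by simpa using (Finset.mem_Icc.1 hk).2))
  · apply Polynomial.le_natDegree_of_ne_zero
    rw [F_coeff_n hn]
    positivity

lemma F_leadingCoeff {n : ℕ} (hn : 1 ≤ n) : (F n).leadingCoeff = (n : ℚ)⁻¹ := by
  rw [Polynomial.leadingCoeff, F_natDegree hn, F_coeff_n hn]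

lemma F_ne_zero {n : ℕ} (hn : 1 ≤ n) : F n ≠ 0 := by
  intro h
  have := F_leadingCoeff hn
  rw [h] at this
  simp at this
  exact absurd this.symm (by positivity)

lemma F_derivative {n : ℕ} :
    Polynomial.derivative (F n) = ∑ j ∈ Finset.range n, (Polynomial.X : ℚ[X]) ^ j := by
  rw [F, map_add, map_sum]
  have h1 : Polynomial.derivative (1 : ℚ[X]) = 0 := Polynomial.derivative_one
  rw [h1, zero_add]
  rw [Finset.sum_bij' (fun k _ => k - 1) (fun j _ => j + 1)]
  · intro k hk
    simp only [Finset.mem_Icc] at hk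
    simp only [Finset.mem_range]; omega
  · intro j hj
    simp only [Finset.mem_range] at hj
    simp only [Finset.mem_Icc]; omega
  · intro k hk; simp only [Finset.mem_Icc] at hk; omega
  · intro j hj; omega
  · intro k hk
    simp only [Finset.mem_Icc] at hk
    rw [Polynomial.derivative_C_mul_X_pow]
    have : ((k:ℚ)⁻¹ * k) = 1 := by
      have hk0 : (k:ℚ) ≠ 0 := by
        exact_mod_cast (by omega : k ≠ 0)
      rw [inv_mul_cancel₀ hk0]
    rw [this, Polynomial.C_1, one_mul]

lemma card_sroots {n : ℕ} (hn : 1 ≤ n) : (sroots n).card = n - 1 := by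
  rw [sroots, Finset.card_erase_of_mem (Polynomial.one_mem_nthRootsFinset (by omega)),
    (Complex.isPrimitiveRoot_exp n (by omega)).card_nthRootsFinset]

lemma geom_eq_prod {n : ℕ} (hn : 1 ≤ n) :
    (∑ j ∈ Finset.range n, (Polynomial.X : ℂ[X]) ^ j) =
      ∏ θ ∈ sroots n, (Polynomial.X - Polynomial.C θ) := by
  have hprim := Complex.isPrimitiveRoot_exp n (by omega)
  have h1 : (Polynomial.X : ℂ[X]) ^ n - 1 =
      ∏ θ ∈ Polynomial.nthRootsFinset n (1 : ℂ), (Polynomial.X - Polynomial.C θ) :=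
    Polynomial.X_pow_sub_one_eq_prod (by omega) hprim
  have h2 : ∏ θ ∈ Polynomial.nthRootsFinset n (1 : ℂ), (Polynomial.X - Polynomial.C θ) =
      (Polynomial.X - Polynomial.C 1) * ∏ θ ∈ sroots n, (Polynomial.X - Polynomial.C θ) :=
    (Finset.mul_prod_erase _ _ (Polynomial.one_mem_nthRootsFinset (by omega))).symm
  have h3 : (∑ j ∈ Finset.range n, (Polynomial.X : ℂ[X]) ^ j) * (Polynomial.X - 1) =
      (Polynomial.X : ℂ[X]) ^ n - 1 := geom_sum_mul _ n
  have hX1 : (Polynomial.X - Polynomial.C 1 : ℂ[X]) ≠ 0 := Polynomial.X_sub_C_ne_zero 1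
  apply mul_right_cancel₀ hX1
  rw [Polynomial.C_1] at *
  rw [h3, h1, h2, mul_comm]

lemma eval_geom_eq_prod {n : ℕ} (hn : 1 ≤ n) (x : ℂ) :
    (∑ j ∈ Finset.range n, x ^ j) = ∏ θ ∈ sroots n, (x - θ) := by
  have := congrArg (Polynomial.eval x) (geom_eq_prod hn)
  simpa [Polynomial.eval_prod, Polynomial.eval_finset_sum] using this

lemma prod_sroots {n : ℕ} (hn : 1 ≤ n) : ∏ θ ∈ sroots n, θ = (-1 : ℂ) ^ (n - 1) := by
  have h := eval_geom_eq_prod hn 0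
  have h0 : (∑ j ∈ Finset.range n, (0:ℂ) ^ j) = 1 := by
    rw [Finset.sum_eq_single 0]
    · simp
    · intro j _ hj; exact zero_pow hj
    · intro h; exact absurd (Finset.mem_range.2 (by omega)) h
  rw [h0] at h
  have h2 : ∏ θ ∈ sroots n, ((0:ℂ) - θ) = (-1 : ℂ) ^ (n-1) * ∏ θ ∈ sroots n, θ := by
    rw [← card_sroots hn, ← Finset.prod_const, ← Finset.prod_mul_distrib]
    apply Finset.prod_congr rfl
    intro θ _; ring
  rw [h2] at h
  have hsq : ((-1 : ℂ) ^ (n-1)) * ((-1 : ℂ) ^ (n-1)) = 1 := by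
    rw [← pow_add, Even.neg_one_pow ⟨n-1, rfl⟩]
  calc ∏ θ ∈ sroots n, θ = ((-1:ℂ)^(n-1) * (-1:ℂ)^(n-1)) * ∏ θ ∈ sroots n, θ := by rw [hsq, one_mul]
    _ = (-1:ℂ)^(n-1) * ((-1:ℂ)^(n-1) * ∏ θ ∈ sroots n, θ) := by ring
    _ = (-1:ℂ)^(n-1) := by rw [← h, mul_one]

lemma deriv_natDegree {n : ℕ} (hn : 1 ≤ n) :
    (Polynomial.derivative (F n)).natDegree = n - 1 := by
  rw [F_derivative]
  apply le_antisymm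
  · apply le_trans (Polynomial.natDegree_sum_le _ _)
    apply Finset.sup_le
    intro j hj
    simp only [Function.comp_apply]
    exact le_trans (Polynomial.natDegree_X_pow_le j) (by simp at hj; omega)
  · apply Polynomial.le_natDegree_of_ne_zero
    rw [Polynomial.finset_sum_coeff]
    rw [Finset.sum_eq_single (n-1)]
    · simp
    · intro j hj hjn
      rw [Polynomial.coeff_X_pow, if_neg (by omega)]
    · intro h; exact absurd (Finset.mem_range.2 (by omega)) h

lemma deriv_map {n : ℕ} :
    (Polynomial.derivative (F n)).map (algebraMap ℚ ℂ) =
      ∑ j ∈ Finset.range n, (Polynomial.X : ℂ[X]) ^ j := by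
  rw [F_derivative, Polynomial.map_sum]
  simp

-- product swap lemma
lemma multiset_prod_finset_prod {α β : Type*} [CommMonoid β] (R : Multiset α)
    (t : Finset ℂ) (g : α → ℂ → β) :
    (R.map (fun r => ∏ θ ∈ t, g r θ)).prod = ∏ θ ∈ t, (R.map (fun r => g r θ)).prod := by
  induction t using Finset.cons_induction with
  | empty => simp
  | cons a t ha ih =>
    rw [Finset.prod_cons]
    rw [← ih, ← Multiset.prod_map_mul]
    congr 1
    apply Multiset.map_congr rfl
    intro r _
    rw [Finset.prod_cons]

lemma discC_eq {n : ℕ} (hn : 1 ≤ n) :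
    discC (F n) = (-1) ^ (n.choose 2) * (n : ℂ) *
      ∏ θ ∈ sroots n, (Polynomial.aeval θ) (F n) := by
  set φ := algebraMap ℚ ℂ with hφ
  set f := (F n).map φ with hf
  have hsplits : f.Splits := by
    exact IsAlgClosed.splits _
  have hfne : f ≠ 0 := by
    simp only [hf, Ne, Polynomial.map_eq_zero]
    exact F_ne_zero hn
  have hcard : Multiset.card f.roots = n := by
    rw [Polynomial.splits_iff_card_roots.mp hsplits, Polynomial.natDegree_map, F_natDegree hn]
  have hlcf : f.leadingCoeff = (((n:ℚ)⁻¹ : ℚ) : ℂ) := by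
    rw [hf, Polynomial.leadingCoeff_map, F_leadingCoeff hn]
    exact eq_ratCast φ _
  have hcne : (((n:ℚ)⁻¹ : ℚ) : ℂ) ≠ 0 := by
    push_cast
    simp only [Ne, inv_eq_zero, Nat.cast_eq_zero]
    omega
  have hfactor : f = Polynomial.C (((n:ℚ)⁻¹ : ℚ) : ℂ) *
      (f.roots.map (fun a => Polynomial.X - Polynomial.C a)).prod := by
    conv_lhs => rw [hsplits.eq_prod_roots]
    rw [hlcf]
  -- eval of derivative at a root
  have hevald : ∀ r : ℂ, ((Polynomial.derivative (F n)).map φ).eval r = ∏ θ ∈ sroots n, (r - θ) := by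
    intro r
    rw [deriv_map, geom_eq_prod hn]
    rw [Polynomial.eval_prod]
    simp
  have hevalf : ∀ θ : ℂ, f.eval θ = (((n:ℚ)⁻¹ : ℚ) : ℂ) * (f.roots.map (fun r => θ - r)).prod := by
    intro θ
    conv_lhs => rw [hfactor]
    rw [Polynomial.eval_mul, Polynomial.eval_C, Polynomial.eval_multiset_prod, Multiset.map_map]
    congr 2
    apply Multiset.map_congr rfl
    intro r _
    simp
  -- main computation
  have key : ∀ θ : ℂ, (f.roots.map (fun r => r - θ)).prod =
      (-1:ℂ)^n * (((n:ℚ)⁻¹ : ℚ) : ℂ)⁻¹ * f.eval θ := by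
    intro θ
    have h1 : (f.roots.map (fun r => r - θ)).prod =
        (f.roots.map (fun r => (-1:ℂ) * (θ - r))).prod := by
      congr 1; apply Multiset.map_congr rfl; intro r _; ring
    rw [h1, Multiset.prod_map_mul]
    have h2 : (f.roots.map (fun _ => (-1:ℂ))).prod = (-1:ℂ)^n := by
      rw [Multiset.map_const', Multiset.prod_replicate, hcard]
    rw [h2, hevalf θ]
    rw [mul_assoc ((-1:ℂ)^n), inv_mul_cancel_left₀ hcne]
  have hres : resC (F n) (Polynomial.derivative (F n)) =
      ∏ θ ∈ sroots n, f.eval θ := by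
    rw [resC, deriv_natDegree hn]
    have hlc2 : ((F n).leadingCoeff : ℂ) = (((n:ℚ)⁻¹ : ℚ) : ℂ) := by rw [F_leadingCoeff hn]
    rw [hlc2]
    have : (f.roots.map (fun r => ((Polynomial.derivative (F n)).map φ).eval r)).prod =
        ∏ θ ∈ sroots n, (f.roots.map (fun r => r - θ)).prod := by
      rw [← multiset_prod_finset_prod]
      congr 1
      apply Multiset.map_congr rfl
      intro r _
      exact hevald r
    rw [this]
    have : ∀ θ ∈ sroots n, (f.roots.map (fun r => r - θ)).prod =
        (-1:ℂ)^n * (((n:ℚ)⁻¹ : ℚ) : ℂ)⁻¹ * f.eval θ := fun θ _ => key θ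
    rw [Finset.prod_congr rfl this]
    rw [Finset.prod_mul_distrib, Finset.prod_const, card_sroots hn]
    have hpow : ((-1:ℂ)^n * (((n:ℚ)⁻¹ : ℚ) : ℂ)⁻¹)^(n-1) =
        ((-1:ℂ)^(n*(n-1))) * ((((n:ℚ)⁻¹ : ℚ) : ℂ)⁻¹)^(n-1) := by
      rw [mul_pow, ← pow_mul]
    rw [hpow]
    have heven : (-1:ℂ)^(n*(n-1)) = 1 := by
      rcases Nat.even_mul_pred_self n with he
      exact Even.neg_one_pow he
    rw [heven, one_mul]
    rw [← mul_assoc, ← mul_pow]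
    rw [mul_inv_cancel₀ hcne, one_pow, one_mul]
  rw [discC, hres, F_natDegree hn, F_leadingCoeff hn]
  have : ((((n:ℚ)⁻¹ : ℚ)) : ℂ)⁻¹ = (n : ℂ) := by
    push_cast
    rw [inv_inv]
  rw [this]
  congr 1
  apply Finset.prod_congr rfl
  intro θ _
  rw [Polynomial.aeval_def, ← Polynomial.eval_map]

lemma finset_lcm_ne_zero (t : Finset ℕ) (ht : ∀ k ∈ t, k ≠ 0) : t.lcm id ≠ 0 := by
  induction t using Finset.induction with
  | empty => simp
  | @insert a t ha ih =>
    rw [Finset.lcm_insert]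
    have h1 : a ≠ 0 := ht a (Finset.mem_insert_self a t)
    have h2 : t.lcm id ≠ 0 := ih (fun k hk => ht k (Finset.mem_insert_of_mem hk))
    have : lcm (id a) (t.lcm id) = Nat.lcm a (t.lcm id) := rfl
    rw [this]
    exact Nat.lcm_ne_zero h1 h2

lemma Ln_ne_zero (n : ℕ) : Ln n ≠ 0 :=
  finset_lcm_ne_zero _ (fun k hk => by simp at hk; omega)

lemma dvd_Ln {n k : ℕ} (h : k ∈ Finset.Icc 1 n) : k ∣ Ln n := Finset.dvd_lcm h

lemma pow_dvd_of_dvd_lcm {p j : ℕ} (hp : p.Prime) (hj : 1 ≤ j) (t : Finset ℕ)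
    (ht : ∀ k ∈ t, k ≠ 0) (h : p ^ j ∣ t.lcm id) : ∃ k ∈ t, p ^ j ∣ k := by
  induction t using Finset.induction with
  | empty =>
    exfalso
    rw [Finset.lcm_empty] at h
    have h1 := Nat.le_of_dvd (by norm_num) h
    have h2 : 1 < p ^ j := Nat.one_lt_pow (by omega) hp.one_lt
    omega
  | @insert a t ha ih =>
    rw [Finset.lcm_insert] at h
    have hane : a ≠ 0 := ht a (Finset.mem_insert_self a t)
    have htne : ∀ k ∈ t, k ≠ 0 := fun k hk => ht k (Finset.mem_insert_of_mem hk)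
    have hlne : t.lcm id ≠ 0 := finset_lcm_ne_zero t htne
    have h' : p ^ j ∣ Nat.lcm a (t.lcm id) := h
    have hfact := Nat.factorization_lcm hane hlne
    have hle := (Nat.Prime.pow_dvd_iff_le_factorization hp (Nat.lcm_ne_zero hane hlne)).mp h'
    rw [hfact, Finsupp.sup_apply] at hle
    rcases le_sup_iff.mp hle with h1 | h2
    · exact ⟨a, Finset.mem_insert_self a t, (Nat.Prime.pow_dvd_iff_le_factorization hp hane).mpr h1⟩
    · obtain ⟨k, hk, hdvd⟩ := ih htne ((Nat.Prime.pow_dvd_iff_le_factorization hp hlne).mpr h2)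
      exact ⟨k, Finset.mem_insert_of_mem hk, hdvd⟩

-- key valuation facts: p prime, e ≥ 1, p^e ≤ n < 2 p^e
section
variable {p e n : ℕ} (hp : p.Prime) (he : 1 ≤ e) (h1 : p ^ e ≤ n) (h2 : n < 2 * p ^ e)

include hp he h1 h2

lemma pe_dvd_Ln : p ^ e ∣ Ln n :=
  dvd_Ln (Finset.mem_Icc.2 ⟨Nat.one_le_pow _ _ hp.pos, h1⟩)

lemma not_pe1_dvd_Ln : ¬ p ^ (e + 1) ∣ Ln n := by
  intro h
  obtain ⟨k, hk, hdvd⟩ := pow_dvd_of_dvd_lcm hp (by omega) _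
    (fun k hk => by simp at hk; omega) h
  simp only [Finset.mem_Icc] at hk
  have hle := Nat.le_of_dvd (by omega) hdvd
  have : p ^ (e+1) = p * p ^ e := by ring
  have hpe : 2 * p ^ e ≤ p ^ (e + 1) := by
    rw [this]
    exact Nat.mul_le_mul_right _ hp.two_le
  omega

-- the unique maximal index: for k ∈ [1,n], k ≠ p^e → ¬ p^e ∣ k
lemma not_pe_dvd {k : ℕ} (hk1 : 1 ≤ k) (hk2 : k ≤ n) (hne : k ≠ p ^ e) : ¬ p ^ e ∣ k := by
  intro hdvd
  obtain ⟨c, hc⟩ := hdvd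
  have hc1 : c ≠ 0 := by rintro rfl; omega
  have hc2 : c = 1 ∨ 2 ≤ c := by omega
  rcases hc2 with rfl | hc2
  · simp at hc; exact hne hc
  · have : 2 * p ^ e ≤ p ^ e * c := by
      calc 2 * p ^ e = p ^ e * 2 := by ring
        _ ≤ p ^ e * c := Nat.mul_le_mul_left _ hc2
    omega

-- p divides L/k for k in [1,n], k ≠ p^e
lemma p_dvd_Ln_div {k : ℕ} (hk1 : 1 ≤ k) (hk2 : k ≤ n) (hne : k ≠ p ^ e) :
    p ∣ Ln n / k := by
  have hkL : k ∣ Ln n := dvd_Ln (Finset.mem_Icc.2 ⟨hk1, hk2⟩)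
  rw [Nat.dvd_div_iff_mul_dvd hkL]
  -- show k * p ∣ Ln n via factorization
  have hk0 : k ≠ 0 := by omega
  have hL0 : Ln n ≠ 0 := Ln_ne_zero n
  have hkp0 : k * p ≠ 0 := by
    have := hp.pos; positivity
  rw [← Nat.factorization_le_iff_dvd hkp0 hL0]
  rw [Nat.factorization_mul hk0 hp.ne_zero, hp.factorization]
  have hkfac : k.factorization ≤ (Ln n).factorization :=
    (Nat.factorization_le_iff_dvd hk0 hL0).mpr hkL
  intro q
  rw [Finsupp.add_apply]
  by_cases hq : q = p
  · subst hq
    have hkq : k.factorization q < e := by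
      by_contra hge
      exact not_pe_dvd hp he h1 h2 hk1 hk2 hne
        ((Nat.Prime.pow_dvd_iff_le_factorization hp hk0).mpr (by omega))
    have hLq : e ≤ (Ln n).factorization q :=
      (Nat.Prime.pow_dvd_iff_le_factorization hp hL0).mp (pe_dvd_Ln hp he h1 h2)
    simp [Finsupp.single_apply]
    omega
  · have hqp : ¬ (p = q) := fun hh => hq hh.symm
    simp only [Finsupp.single_apply, if_neg hqp, add_zero]
    exact hkfac q
end

lemma aeval_F (n : ℕ) (θ : ℂ) :
    (Polynomial.aeval θ) (F n) = 1 + ∑ k ∈ Finset.Icc 1 n, ((k:ℂ))⁻¹ * θ ^ k := by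
  rw [F, map_add, map_one, map_sum]
  congr 1
  apply Finset.sum_congr rfl
  intro k hk
  rw [map_mul, Polynomial.aeval_C, map_pow, Polynomial.aeval_X]
  congr 1
  rw [eq_ratCast]
  push_cast
  ring

lemma aeval_Ftilde {n : ℕ} (θ : ℂ) :
    (Polynomial.aeval θ) (Ftilde n) =
      (Ln n : ℂ) + ∑ k ∈ Finset.Icc 1 n, ((Ln n / k : ℕ) : ℂ) * θ ^ k := by
  rw [Ftilde, map_mul, Polynomial.aeval_C, eq_ratCast, aeval_F]
  push_cast
  rw [mul_add, mul_one, Finset.mul_sum]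
  congr 1
  apply Finset.sum_congr rfl
  intro k hk
  simp only [Finset.mem_Icc] at hk
  have hdvd : k ∣ Ln n := dvd_Ln (Finset.mem_Icc.2 hk)
  have hk0 : (k:ℂ) ≠ 0 := by exact_mod_cast (by omega : k ≠ 0)
  rw [Nat.cast_div hdvd hk0]
  field_simp

lemma sroots_integral {n : ℕ} (hn : 1 ≤ n) {θ : ℂ} (hθ : θ ∈ sroots n) : IsIntegral ℤ θ := by
  have hmem := Finset.mem_of_mem_erase hθ
  have hpow : θ ^ n = 1 := (Polynomial.mem_nthRootsFinset (by omega) (1 : ℂ)).mp hmem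
  refine ⟨Polynomial.X ^ n - Polynomial.C 1, Polynomial.monic_X_pow_sub_C 1 (by omega), ?_⟩
  simp [Polynomial.eval₂_sub, hpow]

lemma aeval_Ftilde_mem {n : ℕ} (hn : 1 ≤ n) {θ : ℂ} (hθ : θ ∈ sroots n) :
    (Polynomial.aeval θ) (Ftilde n) ∈ integralClosure ℤ ℂ := by
  rw [aeval_Ftilde]
  apply add_mem
  · exact Subalgebra.natCast_mem _ _
  · apply Subalgebra.sum_mem
    intro k _
    exact mul_mem (Subalgebra.natCast_mem _ _)
      (pow_mem (sroots_integral hn hθ) k)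

-- expansion lemma
lemma prod_add_mul_eq {t : Finset ℂ} {a w : ℂ → ℂ} {p : ℕ}
    (ha : ∀ θ ∈ t, a θ ∈ integralClosure ℤ ℂ) (hw : ∀ θ ∈ t, w θ ∈ integralClosure ℤ ℂ) :
    ∃ c ∈ integralClosure ℤ ℂ, ∏ θ ∈ t, (a θ + (p:ℂ) * w θ) = ∏ θ ∈ t, a θ + (p:ℂ) * c := by
  classical
  induction t using Finset.cons_induction with
  | empty => exact ⟨0, Subalgebra.zero_mem _, by simp⟩
  | cons x t hx ih =>
    obtain ⟨c, hc, hprod⟩ := ih (fun θ hθ => ha θ (Finset.mem_cons_of_mem hθ))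
      (fun θ hθ => hw θ (Finset.mem_cons_of_mem hθ))
    have hax : a x ∈ integralClosure ℤ ℂ := ha x (Finset.mem_cons_self x t)
    have hwx : w x ∈ integralClosure ℤ ℂ := hw x (Finset.mem_cons_self x t)
    have hA : ∏ θ ∈ t, a θ ∈ integralClosure ℤ ℂ :=
      Subalgebra.prod_mem _ (fun θ hθ => ha θ (Finset.mem_cons_of_mem hθ))
    refine ⟨w x * ∏ θ ∈ t, a θ + a x * c + (p:ℂ) * (w x * c), ?_, ?_⟩
    · exact add_mem (add_mem (mul_mem hwx hA) (mul_mem hax hc))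
        (mul_mem (Subalgebra.natCast_mem _ _) (mul_mem hwx hc))
    · rw [Finset.prod_cons, Finset.prod_cons, hprod]
      ring

-- the master lemma
theorem master {p e n : ℕ} (hp : p.Prime) (he : 1 ≤ e) (hn : 1 ≤ n) (h1 : p ^ e ≤ n)
    (h2 : n < 2 * p ^ e) (z : ℤ) (hz : (z : ℂ) = P n) : ¬ (p : ℤ) ∣ z := by
  classical
  intro hpz
  set m := p ^ e with hm
  set L := Ln n with hL
  have hmIcc : m ∈ Finset.Icc 1 n := Finset.mem_Icc.2 ⟨Nat.one_le_pow _ _ hp.pos, h1⟩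
  -- decomposition of each factor
  set a : ℂ → ℂ := fun θ => ((L / m : ℕ) : ℂ) * θ ^ m with hadef
  set w : ℂ → ℂ := fun θ => ((L / p : ℕ) : ℂ) +
      ∑ k ∈ (Finset.Icc 1 n).erase m, ((L / k / p : ℕ) : ℂ) * θ ^ k with hwdef
  have hdecomp : ∀ θ : ℂ, (Polynomial.aeval θ) (Ftilde n) = a θ + (p:ℂ) * w θ := by
    intro θ
    rw [aeval_Ftilde]
    rw [← Finset.add_sum_erase _ _ hmIcc]
    rw [hadef, hwdef]
    simp only []
    rw [mul_add, Finset.mul_sum]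
    have hLp : ((L:ℕ) : ℂ) = (p:ℂ) * ((L / p : ℕ) : ℂ) := by
      have : p ∣ L := dvd_trans (dvd_pow_self p (by omega : e ≠ 0)) (pe_dvd_Ln hp he h1 h2)
      rw [← Nat.cast_mul, Nat.mul_div_cancel' this]
    have hterm : ∀ k ∈ (Finset.Icc 1 n).erase m,
        ((L / k : ℕ) : ℂ) * θ ^ k = (p:ℂ) * (((L / k / p : ℕ) : ℂ) * θ ^ k) := by
      intro k hk
      have hk1 := Finset.mem_of_mem_erase hk
      simp only [Finset.mem_Icc] at hk1
      have hne : k ≠ m := Finset.ne_of_mem_erase hk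
      have hpdvd : p ∣ L / k := p_dvd_Ln_div hp he h1 h2 hk1.1 hk1.2 hne
      rw [← mul_assoc, ← Nat.cast_mul, Nat.mul_div_cancel' hpdvd]
    rw [Finset.sum_congr rfl hterm, ← hL, hLp]
    ring
  -- apply the expansion
  have hmemθ : ∀ θ ∈ sroots n, IsIntegral ℤ θ := fun θ hθ => sroots_integral hn hθ
  have ha_mem : ∀ θ ∈ sroots n, a θ ∈ integralClosure ℤ ℂ := fun θ hθ =>
    mul_mem (Subalgebra.natCast_mem _ _) (pow_mem (hmemθ θ hθ) m)
  have hw_mem : ∀ θ ∈ sroots n, w θ ∈ integralClosure ℤ ℂ := fun θ hθ =>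
    add_mem (Subalgebra.natCast_mem _ _)
      (Subalgebra.sum_mem _ (fun k _ => mul_mem (Subalgebra.natCast_mem _ _)
        (pow_mem (hmemθ θ hθ) k)))
  obtain ⟨c, hc, hPc⟩ := prod_add_mul_eq ha_mem hw_mem
  have hProdA : ∏ θ ∈ sroots n, a θ = ((L / m : ℕ) : ℂ) ^ (n-1) * ((-1:ℂ) ^ (n-1)) ^ m := by
    rw [hadef]
    simp only []
    rw [Finset.prod_mul_distrib, Finset.prod_const, card_sroots hn, Finset.prod_pow,
      prod_sroots hn]
  -- put it together
  have hP : P n = ((L / m : ℕ) : ℂ) ^ (n-1) * ((-1:ℂ) ^ (n-1)) ^ m + (p:ℂ) * c := by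
    rw [P, ← hProdA, ← hPc]
    apply Finset.prod_congr rfl
    intro θ _
    exact hdecomp θ
  -- σ as integer
  set σ : ℤ := (-1) ^ ((n-1) * m) with hσ
  have hσc : ((σ : ℤ) : ℂ) = ((-1:ℂ) ^ (n-1)) ^ m := by
    rw [hσ, ← pow_mul]
    push_cast
    ring
  set wz : ℤ := z - σ * ((L / m : ℕ) : ℤ) ^ (n-1) with hwz
  have hwc : ((wz : ℤ) : ℂ) = (p:ℂ) * c := by
    have hcast : ((wz : ℤ) : ℂ) = (z:ℂ) - ((σ:ℤ):ℂ) * (((L / m : ℕ)):ℂ) ^ (n-1) := by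
      simp only [hwz, Int.cast_sub, Int.cast_mul, Int.cast_pow, Int.cast_natCast]
    rw [hcast, hz, hP, hσc]
    ring
  -- wz / p is an algebraic integer, hence an integer
  have hcInt : IsIntegral ℤ c := hc
  have hpC : (p:ℂ) ≠ 0 := by exact_mod_cast hp.ne_zero
  have hq : (algebraMap ℚ ℂ) ((wz : ℚ) / (p : ℚ)) = c := by
    rw [eq_ratCast, Rat.cast_div, Rat.cast_intCast, Rat.cast_natCast]
    rw [div_eq_iff hpC, mul_comm]
    exact hwc
  have hqInt : IsIntegral ℤ ((wz : ℚ) / (p : ℚ)) := by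
    have hinj : Function.Injective (algebraMap ℚ ℂ) := (algebraMap ℚ ℂ).injective
    have := (isIntegral_algHom_iff ((algebraMap ℚ ℂ).toIntAlgHom) hinj (x := (wz : ℚ) / (p : ℚ)))
    apply this.mp
    show IsIntegral ℤ ((algebraMap ℚ ℂ) ((wz : ℚ) / (p : ℚ)))
    rw [hq]
    exact hcInt
  obtain ⟨y, hy⟩ := IsIntegrallyClosed.isIntegral_iff.mp hqInt
  have hpw : (p : ℤ) ∣ wz := by
    refine ⟨y, ?_⟩
    have : ((wz : ℚ)) = (p : ℚ) * (y : ℚ) := by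
      rw [show ((y:ℤ):ℚ) = (algebraMap ℤ ℚ) y from rfl, hy]
      have hpQ : (p:ℚ) ≠ 0 := by exact_mod_cast hp.ne_zero
      rw [mul_div_assoc']
      exact (mul_div_cancel_left₀ _ hpQ).symm
    exact_mod_cast this
  -- conclude p ∣ (L/m)^(n-1)
  have hdvd1 : (p : ℤ) ∣ σ * ((L / m : ℕ) : ℤ) ^ (n-1) := by
    have : σ * ((L / m : ℕ) : ℤ) ^ (n-1) = z - wz := by rw [hwz]; ring
    rw [this]
    exact dvd_sub hpz hpw
  have hdvd2 : (p : ℤ) ∣ ((L / m : ℕ) : ℤ) ^ (n-1) := by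
    have hσσ : σ * σ = 1 := by
      rw [hσ, ← pow_add, Even.neg_one_pow ⟨(n-1)*m, rfl⟩]
    have := Dvd.dvd.mul_left hdvd1 σ
    rwa [← mul_assoc, hσσ, one_mul] at this
  have hdvd3 : p ∣ (L / m) ^ (n-1) := by exact_mod_cast hdvd2
  have hdvd4 : p ∣ L / m := by
    rcases Nat.eq_zero_or_pos (n-1) with h0 | hpos
    · rw [h0, pow_zero] at hdvd3
      exact absurd (Nat.le_of_dvd one_pos hdvd3) (by have := hp.two_le; omega)
    · exact hp.dvd_of_dvd_pow hdvd3
  -- contradiction with not_pe1_dvd_Ln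
  obtain ⟨t, ht⟩ := hdvd4
  have hmL : m ∣ L := pe_dvd_Ln hp he h1 h2
  have : L = m * (p * t) := by
    rw [← ht, Nat.mul_div_cancel' hmL]
  have : p ^ (e+1) ∣ L := ⟨t, by rw [this, hm]; ring⟩
  exact not_pe1_dvd_Ln hp he h1 h2 this

lemma conj_aeval (q : Polynomial ℚ) (θ : ℂ) :
    (starRingEnd ℂ) ((Polynomial.aeval θ) q) = (Polynomial.aeval ((starRingEnd ℂ) θ)) q := by
  rw [Polynomial.aeval_def, Polynomial.aeval_def, Polynomial.hom_eval₂]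
  congr 1
  apply RingHom.ext
  intro x
  simp only [RingHom.comp_apply]
  simp [map_ratCast, eq_ratCast]

lemma prod_conj_nonneg (q : Polynomial ℚ) (t : Finset ℂ)
    (hconj : ∀ θ ∈ t, (starRingEnd ℂ) θ ∈ t) (him : ∀ θ ∈ t, θ.im ≠ 0) :
    ∃ x : ℝ, 0 ≤ x ∧ ((x:ℂ) = ∏ θ ∈ t, (Polynomial.aeval θ) q) := by
  classical
  induction t using Finset.strongInduction with
  | _ t ih =>
    rcases Finset.eq_empty_or_nonempty t with rfl | ⟨θ, hθ⟩
    · exact ⟨1, by norm_num, by simp⟩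
    · have hθ' : (starRingEnd ℂ) θ ∈ t := hconj θ hθ
      have hne : (starRingEnd ℂ) θ ≠ θ := by
        intro h
        apply him θ hθ
        have := congrArg Complex.im h
        simp only [Complex.conj_im] at this
        linarith
      set θ' := (starRingEnd ℂ) θ with hθ'def
      set t' := (t.erase θ).erase θ' with ht'
      have hss : t' ⊂ t := by
        apply Finset.ssubset_of_subset_of_ssubset
        · exact Finset.erase_subset _ _
        · exact Finset.erase_ssubset hθ
      have hconj' : ∀ ψ ∈ t', (starRingEnd ℂ) ψ ∈ t' := by
        intro ψ hψ
        have hψt : ψ ∈ t := Finset.mem_of_mem_erase (Finset.mem_of_mem_erase hψ)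
        have h1 : ψ ≠ θ' := Finset.ne_of_mem_erase hψ
        have h2 : ψ ≠ θ := Finset.ne_of_mem_erase (Finset.mem_of_mem_erase hψ)
        rw [ht', Finset.mem_erase, Finset.mem_erase]
        refine ⟨?_, ?_, hconj ψ hψt⟩
        · intro h
          apply h2
          have := congrArg (starRingEnd ℂ) h
          simpa [hθ'def] using this
        · intro h
          apply h1
          have := congrArg (starRingEnd ℂ) h
          simpa [hθ'def] using this
      have him' : ∀ ψ ∈ t', ψ.im ≠ 0 := fun ψ hψ =>
        him ψ (Finset.mem_of_mem_erase (Finset.mem_of_mem_erase hψ))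
      obtain ⟨x, hx0, hxprod⟩ := ih t' hss hconj' him'
      refine ⟨Complex.normSq ((Polynomial.aeval θ) q) * x, ?_, ?_⟩
      · exact mul_nonneg (Complex.normSq_nonneg _) hx0
      · have hsplit : ∏ ψ ∈ t, (Polynomial.aeval ψ) q =
            (Polynomial.aeval θ) q * ((Polynomial.aeval θ') q * ∏ ψ ∈ t', (Polynomial.aeval ψ) q) := by
          rw [ht', ← Finset.mul_prod_erase t _ hθ,
            ← Finset.mul_prod_erase (t.erase θ) _ (Finset.mem_erase.2 ⟨hne, hθ'⟩)]
        rw [hsplit, ← hxprod]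
        have : (Polynomial.aeval θ') q = (starRingEnd ℂ) ((Polynomial.aeval θ) q) := by
          rw [hθ'def, ← conj_aeval]
        rw [this]
        push_cast
        rw [← Complex.mul_conj]
        ring

lemma sroots_conj {n : ℕ} (hn : 1 ≤ n) : ∀ θ ∈ sroots n, (starRingEnd ℂ) θ ∈ sroots n := by
  intro θ hθ
  rw [sroots, Finset.mem_erase] at hθ ⊢
  obtain ⟨hne, hmem⟩ := hθ
  constructor
  · intro h
    apply hne
    have := congrArg (starRingEnd ℂ) h
    simpa using this
  · rw [Polynomial.mem_nthRootsFinset (by omega) (1 : ℂ)] at hmem ⊢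
    rw [← map_pow, hmem, map_one]

lemma sroots_im {n : ℕ} (hodd : Odd n) : ∀ θ ∈ sroots n, θ.im ≠ 0 := by
  intro θ hθ him
  rw [sroots, Finset.mem_erase] at hθ
  obtain ⟨hne, hmem⟩ := hθ
  have hn1 : 1 ≤ n := hodd.pos
  rw [Polynomial.mem_nthRootsFinset (by omega) (1 : ℂ)] at hmem
  have hre : θ = ((θ.re : ℝ) : ℂ) := by
    apply Complex.ext
    · simp
    · simp [him]
  rw [hre] at hmem
  rw [← Complex.ofReal_pow] at hmem
  have : (θ.re) ^ n = 1 := by exact_mod_cast hmem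
  rw [pow_eq_one_iff_cases] at this
  rcases this with h | h | ⟨h1, h2⟩
  · omega
  · exact hne (by rw [hre, h]; norm_num)
  · exact (Nat.not_even_iff_odd.2 hodd) h2

-- previously proven
lemma P_eq {n : ℕ} (hn : 1 ≤ n) :
    P n = ((Ln n : ℂ)) ^ (n - 1) * ∏ θ ∈ sroots n, (Polynomial.aeval θ) (F n) := by
  have : ∀ θ : ℂ, (Polynomial.aeval θ) (Ftilde n) = (Ln n : ℂ) * (Polynomial.aeval θ) (F n) := by
    intro θ
    rw [Ftilde, map_mul, Polynomial.aeval_C, eq_ratCast]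
    push_cast
    ring
  rw [P, show (Polynomial.nthRootsFinset n (1 : ℂ)).erase 1 = sroots n from rfl]
  rw [Finset.prod_congr rfl (fun θ _ => this θ), Finset.prod_mul_distrib,
    Finset.prod_const, card_sroots hn]

lemma neg_one_pow_sq (c : ℕ) : ((-1:ℂ) ^ c) * ((-1:ℂ) ^ c) = 1 := by
  rw [← pow_add, Even.neg_one_pow ⟨c, rfl⟩]

/-- shared: from a hypothetical rational square root of the discriminant produce the
integer value of `P n` together with its defining rational equation. -/
lemma key_int {n : ℕ} (hn : 1 ≤ n) (r : ℚ) (hr : (r:ℂ)^2 = discC (F n)) :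
    ∃ z : ℤ, (z : ℂ) = P n ∧
      (z : ℚ) = (-1:ℚ) ^ (n.choose 2) * r^2 * (Ln n : ℚ)^(n-1) / (n : ℚ) := by
  set A := ∏ θ ∈ sroots n, (Polynomial.aeval θ) (F n) with hA
  have hdisc := discC_eq hn
  set q : ℚ := (-1:ℚ) ^ (n.choose 2) * r^2 * (Ln n : ℚ)^(n-1) / (n : ℚ) with hq
  have hnC : (n:ℂ) ≠ 0 := by exact_mod_cast (by omega : n ≠ 0)
  have hqP : ((q : ℚ) : ℂ) = P n := by
    rw [hq]
    push_cast
    rw [hr, hdisc, P_eq hn, ← hA]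
    field_simp
    ring_nf
    rw [pow_mul, sq, neg_one_pow_sq, mul_one]
  have hPint : P n ∈ integralClosure ℤ ℂ := by
    rw [P]
    exact Subalgebra.prod_mem _ (fun θ hθ => aeval_Ftilde_mem hn hθ)
  have hqInt : IsIntegral ℤ q := by
    have hinj : Function.Injective (algebraMap ℚ ℂ) := (algebraMap ℚ ℂ).injective
    exact (isIntegral_algHom_iff ((algebraMap ℚ ℂ).toIntAlgHom) hinj (x := q)).mp
      (by show IsIntegral ℤ ((algebraMap ℚ ℂ) q)
          rw [show (algebraMap ℚ ℂ) q = ((q:ℚ):ℂ) from eq_ratCast _ _, hqP]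
          exact hPint)
  obtain ⟨z, hz⟩ := IsIntegrallyClosed.isIntegral_iff.mp hqInt
  refine ⟨z, ?_, ?_⟩
  · have : ((z:ℚ):ℂ) = P n := by
      rw [show ((z:ℤ):ℚ) = (algebraMap ℤ ℚ) z from rfl, hz, hqP]
    rw [← this]
    push_cast
    ring
  · rw [show ((z:ℤ):ℚ) = (algebraMap ℤ ℚ) z from rfl, hz]

lemma padicValNat_Ln {p e n : ℕ} (hp : p.Prime) (he : 1 ≤ e) (h1 : p ^ e ≤ n)
    (h2 : n < 2 * p ^ e) : padicValNat p (Ln n) = e := by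
  have hL0 : Ln n ≠ 0 := Ln_ne_zero n
  have ha := (Nat.Prime.pow_dvd_iff_le_factorization hp hL0).mp (pe_dvd_Ln hp he h1 h2)
  have hb : ¬ (e + 1 ≤ (Ln n).factorization p) := fun h =>
    not_pe1_dvd_Ln hp he h1 h2 ((Nat.Prime.pow_dvd_iff_le_factorization hp hL0).mpr h)
  rw [Nat.factorization_def _ hp] at ha hb
  omega

/-- valuation equation: `2 v_p(r) = v_p(n) - (n-1) e`. -/
lemma val_eq {p e n : ℕ} (hp : p.Prime) (he : 1 ≤ e) (hn : 1 ≤ n) (h1 : p ^ e ≤ n)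
    (h2 : n < 2 * p ^ e) (r : ℚ) (z : ℤ)
    (hzq : (z : ℚ) = (-1:ℚ) ^ (n.choose 2) * r^2 * (Ln n : ℚ)^(n-1) / (n : ℚ))
    (hpz : ¬ (p:ℤ) ∣ z) :
    2 * padicValRat p r = (padicValNat p n : ℤ) - (n - 1 : ℕ) * e := by
  haveI : Fact p.Prime := ⟨hp⟩
  have hn0 : (n:ℚ) ≠ 0 := by exact_mod_cast (by omega : n ≠ 0)
  have hL0 : ((Ln n : ℕ):ℚ) ≠ 0 := by exact_mod_cast Ln_ne_zero n
  have hz0 : z ≠ 0 := by rintro rfl; exact hpz (dvd_zero _)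
  have hr0 : r ≠ 0 := by
    rintro rfl
    apply hz0
    have : (z:ℚ) = 0 := by rw [hzq]; ring
    exact_mod_cast this
  have hsgn : ((-1:ℚ) ^ (n.choose 2)) ≠ 0 := by
    rcases Nat.even_or_odd (n.choose 2) with h | h
    · rw [Even.neg_one_pow h]; norm_num
    · rw [Odd.neg_one_pow h]; norm_num
  have hvz : padicValRat p (z:ℚ) = 0 := by
    rw [padicValRat.of_int, padicValInt.eq_zero_of_not_dvd hpz]
    norm_num
  have hvsgn : padicValRat p ((-1:ℚ) ^ (n.choose 2)) = 0 := by
    rcases Nat.even_or_odd (n.choose 2) with h | h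
    · rw [Even.neg_one_pow h, padicValRat.one]
    · rw [Odd.neg_one_pow h, ← padicValRat.neg, neg_neg, padicValRat.one]
  have hvL : padicValRat p ((Ln n : ℕ):ℚ) = e := by
    rw [padicValRat.of_nat, padicValNat_Ln hp he h1 h2]
  have hvn : padicValRat p ((n : ℕ):ℚ) = padicValNat p n := padicValRat.of_nat
  have hmulne : ((-1:ℚ) ^ (n.choose 2) * r^2 * (Ln n : ℚ)^(n-1)) ≠ 0 := by
    apply mul_ne_zero (mul_ne_zero hsgn (pow_ne_zero _ hr0)) (pow_ne_zero _ hL0)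
  have := congrArg (padicValRat p) hzq
  rw [hvz, padicValRat.div hmulne hn0,
    padicValRat.mul (mul_ne_zero hsgn (pow_ne_zero _ hr0)) (pow_ne_zero _ hL0),
    padicValRat.mul hsgn (pow_ne_zero _ hr0),
    padicValRat.pow r, padicValRat.pow ((Ln n : ℕ) : ℚ), hvsgn, hvL, hvn] at this
  push_cast at this ⊢
  linarith

-- defs
-- prior results
-- case (i): even n ≥ 4
lemma even_case {n : ℕ} (h4 : 4 ≤ n) (hev : n % 2 = 0) :
    ¬ ∃ r : ℚ, (r : ℂ) ^ 2 = discC (F n) := by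
  rintro ⟨r, hr⟩
  have hn : 1 ≤ n := by omega
  obtain ⟨z, hzC, hzq⟩ := key_int hn r hr
  -- Bertrand
  obtain ⟨p, hp, hmp, hple⟩ := Nat.bertrand (n / 2) (by omega)
  have h2m : 2 * (n / 2) = n := by omega
  have hple' : p ≤ n := by omega
  have hpn : p ≠ n := by
    rintro rfl
    have : p = 2 := (Nat.Prime.even_iff hp).mp (Nat.even_iff.2 hev)
    omega
  have h1 : p ^ 1 ≤ n := by rw [pow_one]; omega
  have h2 : n < 2 * p ^ 1 := by rw [pow_one]; omega
  have hpz := master hp le_rfl hn h1 h2 z hzC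
  have hpdvdn : ¬ p ∣ n := by
    rintro ⟨c, rfl⟩
    rcases Nat.lt_or_ge c 2 with hc | hc
    · interval_cases c <;> omega
    · have : 2 * p ≤ p * c := by
        calc 2 * p = p * 2 := by ring
          _ ≤ p * c := Nat.mul_le_mul_left _ hc
      omega
  have hval := val_eq hp le_rfl hn h1 h2 r z hzq hpz
  rw [padicValNat.eq_zero_of_not_dvd hpdvdn] at hval
  have hcast : ((n - 1 : ℕ) : ℤ) = (n : ℤ) - 1 := by
    rw [Nat.cast_sub hn]; norm_num
  rw [hcast] at hval
  -- 2 * v = 0 - (n-1) * 1 with n even: parity contradiction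
  omega

-- case (ii): n ≡ 3 mod 4
lemma sign_case {n : ℕ} (h3 : n % 4 = 3) :
    ¬ ∃ r : ℚ, (r : ℂ) ^ 2 = discC (F n) := by
  rintro ⟨r, hr⟩
  have hn : 1 ≤ n := by omega
  have hodd : Odd n := by
    rw [Nat.odd_iff]; omega
  obtain ⟨z, hzC, hzq⟩ := key_int hn r hr
  -- Bertrand prime
  obtain ⟨p, hp, hmp, hple⟩ := Nat.bertrand ((n - 1) / 2) (by omega)
  have h1 : p ^ 1 ≤ n := by rw [pow_one]; omega
  have h2 : n < 2 * p ^ 1 := by rw [pow_one]; omega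
  have hpz := master hp le_rfl hn h1 h2 z hzC
  -- sign analysis
  obtain ⟨x, hx0, hxA⟩ := prod_conj_nonneg (F n) (sroots n) (sroots_conj hn) (sroots_im hodd)
  have hchoose : Odd (n.choose 2) := by
    obtain ⟨k, hk⟩ : ∃ k, n = 4 * k + 3 := ⟨n / 4, by omega⟩
    rw [Nat.choose_two_right, hk]
    have h4 : 4 * k + 3 - 1 = 4 * k + 2 := by omega
    have h5 : (4 * k + 3) * (4 * k + 3 - 1) = 2 * ((4 * k + 3) * (2 * k + 1)) := by
      rw [h4]; ring
    rw [h5, Nat.mul_div_cancel_left _ (by norm_num)]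
    exact (Nat.odd_mul.2 ⟨⟨2*k+1, by ring⟩, ⟨k, by ring⟩⟩)
  have hdisc := discC_eq hn
  rw [hdisc, ← hxA, Odd.neg_one_pow hchoose] at hr
  -- real equation
  have hreal : ((r : ℝ) ^ 2 : ℝ) = -((n : ℝ) * x) := by
    have : ((((r:ℝ)^2 : ℝ)) : ℂ) = ((-((n:ℝ) * x) : ℝ) : ℂ) := by
      push_cast
      rw [hr]
      ring
    exact_mod_cast this
  have hx_eq : x = 0 := by
    have h0 : (0:ℝ) ≤ (r:ℝ)^2 := sq_nonneg _
    have hn0 : (0:ℝ) < n := by exact_mod_cast (by omega : 0 < n)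
    nlinarith
  -- then P n = 0, so z = 0, contradiction with ¬ p ∣ z
  have hPn : P n = 0 := by
    rw [P_eq hn, ← hxA, hx_eq]
    norm_num
  have hz0 : z = 0 := by
    have : (z:ℂ) = 0 := by rw [hzC, hPn]
    exact_mod_cast this
  rw [hz0] at hpz
  exact hpz (dvd_zero _)

-- case (iii): n = p^e, e odd, n ≡ 1 mod 4
lemma pp_case {n p e : ℕ} (hp : p.Prime) (he : Odd e) (he0 : 0 < e) (hne : n = p ^ e)
    (h1mod : n % 4 = 1) : ¬ ∃ r : ℚ, (r : ℂ) ^ 2 = discC (F n) := by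
  rintro ⟨r, hr⟩
  have hn : 1 ≤ n := by
    rw [hne]; exact Nat.one_le_pow _ _ hp.pos
  have hn5 : 2 ≤ n := by
    have hpe : p ≤ p ^ e := Nat.le_self_pow (by omega : e ≠ 0) p
    have := hp.two_le
    omega
  obtain ⟨z, hzC, hzq⟩ := key_int hn r hr
  have h1 : p ^ e ≤ n := by omega
  have h2 : n < 2 * p ^ e := by omega
  have hpz := master hp he0 hn h1 h2 z hzC
  have hval := val_eq hp he0 hn h1 h2 r z hzq hpz
  have hvn : padicValNat p n = e := by
    rw [hne]
    haveI : Fact p.Prime := ⟨hp⟩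
    exact padicValNat.prime_pow e
  rw [hvn] at hval
  have hcast : ((n - 1 : ℕ) : ℤ) = (n : ℤ) - 1 := by
    rw [Nat.cast_sub hn]; norm_num
  rw [hcast] at hval
  -- 2 v = e - (n-1) e, with e odd and n odd: RHS odd
  have hnodd : Odd (n:ℤ) := by
    rw [Int.odd_iff]; omega
  have heodd : Odd (e:ℤ) := by
    rw [Int.odd_iff]
    rcases he with ⟨k, hk⟩
    omega
  have hre : ¬ Even ((e:ℤ) - ((n:ℤ) - 1) * e) := by
    rw [Int.even_sub, Int.even_mul]
    have hev1 : ¬ Even (e:ℤ) := by rwa [Int.not_even_iff_odd]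
    have hev2 : Even ((n:ℤ) - 1) := by
      rcases hnodd with ⟨k, hk⟩
      exact ⟨k, by omega⟩
    tauto
  apply hre
  rw [← hval]
  exact ⟨padicValRat p r, by ring⟩

-- case n = 2
lemma two_case : ¬ ∃ r : ℚ, (r : ℂ) ^ 2 = discC (F 2) := by
  rintro ⟨r, hr⟩
  have hs : sroots 2 = {-1} := by
    ext θ
    rw [sroots, Finset.mem_erase, Polynomial.mem_nthRootsFinset (by norm_num) (1 : ℂ)]
    constructor
    · rintro ⟨hne, hpow⟩
      have : (θ - 1) * (θ + 1) = 0 := by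
        have : θ^2 - 1 = 0 := by rw [hpow]; ring
        linear_combination this
      rcases mul_eq_zero.mp this with h | h
      · exact absurd (by linear_combination h) hne
      · simp only [Finset.mem_singleton]
        linear_combination h
    · intro h
      simp only [Finset.mem_singleton] at h
      subst h
      norm_num
  have hA : ∏ θ ∈ sroots 2, (Polynomial.aeval θ) (F 2) = (1/2 : ℂ) := by
    rw [hs, Finset.prod_singleton]
    rw [F]
    rw [show Finset.Icc 1 2 = {1, 2} from rfl]
    rw [Finset.sum_insert (by norm_num), Finset.sum_singleton]
    simp only [map_add, map_one, map_mul, Polynomial.aeval_C, map_pow, Polynomial.aeval_X]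
    rw [eq_ratCast, eq_ratCast]
    push_cast
    ring
  have hd := discC_eq (n := 2) (by norm_num)
  rw [hA] at hd
  norm_num at hd
  rw [hd] at hr
  -- (r : ℂ)^2 = -1 is impossible
  have : ((r:ℝ)^2 : ℝ) = -1 := by
    have : (((r:ℝ)^2 : ℝ) : ℂ) = ((-1 : ℝ) : ℂ) := by
      push_cast
      rw [hr]
    exact_mod_cast this
  nlinarith [sq_nonneg (r:ℝ)]

/-- If `n ≥ 1` and `n ≡ 0, 2, 3 (mod 4)`, or `n ≡ 1 (mod 4)` and `n` is an odd
power of a prime, then `disc(F n)` is not the square of a rational number. -/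
theorem stmt0 (n : ℕ) (hn : 1 ≤ n)
    (h : (n % 4 = 0 ∨ n % 4 = 2 ∨ n % 4 = 3) ∨
      (n % 4 = 1 ∧ ∃ p e : ℕ, p.Prime ∧ Odd e ∧ 0 < e ∧ n = p ^ e)) :
    ¬ ∃ r : ℚ, (r : ℂ) ^ 2 = discC (F n) := by
  rcases h with (h0 | h2 | h3) | ⟨h1, p, e, hp, he, he0, hne⟩
  · exact even_case (by omega) (by omega)
  · rcases Nat.eq_or_lt_of_le (by omega : 2 ≤ n) with h | h
    · rw [← h]; exact two_case
    · exact even_case (by omega) (by omega)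
  · exact sign_case h3
  · exact pp_case hp he he0 hne h1
end

section
/- Let p be an odd prime, e a positive integer, and n = p^{2e}. Then the integer 𝒫_n = ∏_θ F̃_n(θ), with θ ranging over the nontrivial n-th roots of unity in ℂ, is coprime to p. -/
open Polynomial BigOperators

lemma lcm_fact_le {p : ℕ} (t : ℕ) :
    ∀ s : Finset ℕ, (∀ k ∈ s, k ≠ 0 ∧ k.factorization p ≤ t) →
      (s.lcm id) ≠ 0 ∧ (s.lcm id).factorization p ≤ t := by
  intro s
  induction s using Finset.induction_on with
  | empty => intro _; simp
  | insert a s ha ih =>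
    intro h
    have h1 := h a (Finset.mem_insert_self a s)
    have h2 := ih (fun k hk => h k (Finset.mem_insert_of_mem hk))
    rw [Finset.lcm_insert, id, lcm_eq_nat_lcm]
    constructor
    · exact Nat.lcm_ne_zero h1.1 h2.1
    · rw [Nat.factorization_lcm h1.1 h2.1]
      simp only [Finsupp.sup_apply, sup_le_iff]
      exact ⟨h1.2, h2.2⟩

lemma prod_decomp {K : Type*} [CommRing K] (c p : ℕ) :
    ∀ s : Finset K, ∀ f : K → K,
      (∀ θ ∈ s, ∃ u ∈ integralClosure ℤ K, f θ = (c : K) + (p : K) * u) →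
      ∃ w ∈ integralClosure ℤ K, ∏ θ ∈ s, f θ = (c : K) ^ s.card + (p : K) * w := by
  intro s
  induction s using Finset.cons_induction with
  | empty => intro f _; exact ⟨0, Subalgebra.zero_mem _, by simp⟩
  | cons a s ha ih =>
    intro f h
    obtain ⟨u, hu, hfa⟩ := h a (Finset.mem_cons_self a s)
    obtain ⟨w, hw, hprod⟩ := ih f (fun θ hθ => h θ (Finset.mem_cons_of_mem hθ))
    refine ⟨u * (c : K) ^ s.card + (c : K) * w + (p : K) * (u * w), ?_, ?_⟩
    · refine Subalgebra.add_mem _ (Subalgebra.add_mem _ ?_ ?_) ?_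
      · exact Subalgebra.mul_mem _ hu (Subalgebra.pow_mem _ (Subalgebra.natCast_mem _ _) _)
      · exact Subalgebra.mul_mem _ (Subalgebra.natCast_mem _ _) hw
      · exact Subalgebra.mul_mem _ (Subalgebra.natCast_mem _ _) (Subalgebra.mul_mem _ hu hw)
    · rw [Finset.prod_cons, hfa, hprod, Finset.card_cons]
      ring

lemma eval_Ftilde {K : Type*} [Field K] [CharZero K] [Algebra ℚ K]
    {n : ℕ} (hn : 0 < n) {θ : K} (hθ : θ ^ n = 1) :
    aeval θ (Ftilde n) =
      ((Ln n / n : ℕ) : K) +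
        (((Ln n : ℕ) : K) + ∑ k ∈ (Finset.Icc 1 n).erase n, ((Ln n / k : ℕ) : K) * θ ^ k) := by
  have hstep : ∀ k ∈ Finset.Icc 1 n,
      algebraMap ℚ K (Ln n : ℚ) * (algebraMap ℚ K ((k : ℚ)⁻¹) * θ ^ k)
        = ((Ln n / k : ℕ) : K) * θ ^ k := by
    intro k hk
    obtain ⟨hk1, hk2⟩ := Finset.mem_Icc.mp hk
    have hd : k ∣ Ln n := Finset.dvd_lcm hk
    have hk0 : (k : ℚ) ≠ 0 := Nat.cast_ne_zero.mpr (by omega)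
    rw [← mul_assoc, ← map_mul]
    congr 1
    have : (Ln n : ℚ) * (k : ℚ)⁻¹ = ((Ln n / k : ℕ) : ℚ) := by
      rw [Nat.cast_div hd hk0, div_eq_mul_inv]
    rw [this, map_natCast]
  have hmem : n ∈ Finset.Icc 1 n := Finset.mem_Icc.mpr ⟨hn, le_rfl⟩
  simp only [Ftilde, F, map_mul, map_add, map_one, map_sum, aeval_C, map_pow, aeval_X]
  rw [mul_add, mul_one, Finset.mul_sum, Finset.sum_congr rfl hstep,
    ← Finset.add_sum_erase _ _ hmem, hθ, mul_one, map_natCast]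
  ring

/-- If `n = p^(2e)` for an odd prime `p` and `e ≥ 1`, then the integer
`𝒫 n` is coprime to `p`. -/
theorem stmt1 (p e n : ℕ) (hp : p.Prime) (hodd : p ≠ 2) (he : 0 < e) (hn : n = p ^ (2 * e)) :
    ∃ z : ℤ, (z : ℂ) = P n ∧ IsCoprime z (p : ℤ) := by
  classical
  have hp1 : 1 < p := hp.one_lt
  have npos : 0 < n := by rw [hn]; positivity
  have hn_ne : n ≠ 0 := npos.ne'
  -- arithmetic facts about Ln n
  have hdvd_Ln : ∀ k, 1 ≤ k → k ≤ n → k ∣ Ln n := fun k h1 h2 =>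
    Finset.dvd_lcm (Finset.mem_Icc.mpr ⟨h1, h2⟩)
  have hn_dvd : n ∣ Ln n := hdvd_Ln n npos le_rfl
  have hfact : ∀ k ∈ Finset.Icc 1 n, k ≠ 0 ∧ k.factorization p ≤ 2 * e := by
    intro k hk
    obtain ⟨h1, h2⟩ := Finset.mem_Icc.mp hk
    refine ⟨by omega, ?_⟩
    by_contra hlt
    push_neg at hlt
    have hdk : p ^ (2 * e + 1) ∣ k :=
      dvd_trans (pow_dvd_pow p (by omega)) (Nat.ordProj_dvd k p)
    have hle := Nat.le_of_dvd (by omega) hdk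
    have hlt2 : p ^ (2 * e) < p ^ (2 * e + 1) := Nat.pow_lt_pow_right hp1 (by omega)
    omega
  obtain ⟨hLn0, hLnfact⟩ := lcm_fact_le (p := p) (2 * e) _ hfact
  have hnp_not_dvd : ¬ p ^ (2 * e + 1) ∣ Ln n := by
    intro h
    have := (Nat.Prime.pow_dvd_iff_le_factorization hp hLn0).mp h
    omega
  set c : ℕ := Ln n / n with hc
  have hcn : c * n = Ln n := Nat.div_mul_cancel hn_dvd
  have hpc : ¬ p ∣ c := by
    rintro ⟨m, hm⟩
    refine hnp_not_dvd ⟨m, ?_⟩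
    rw [← hcn, hm, hn]; ring
  have hpn : p ∣ n := by
    rw [hn]; exact dvd_pow_self p (by omega)
  have hpLn : p ∣ Ln n := dvd_trans hpn hn_dvd
  have hdiv_k : ∀ k, 1 ≤ k → k < n → p ∣ Ln n / k := by
    intro k h1 h2
    have hk0 : k ≠ 0 := by omega
    set a := k.factorization p with hadef
    have ha : a < 2 * e := by
      by_contra hcon
      push_neg at hcon
      have hdk : p ^ (2 * e) ∣ k := dvd_trans (pow_dvd_pow p hcon) (Nat.ordProj_dvd k p)
      have hge : p ^ (2 * e) ≤ k := Nat.le_of_dvd (Nat.pos_of_ne_zero hk0) hdk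
      omega
    have hkdLn : k ∣ Ln n := hdvd_Ln k h1 (le_of_lt h2)
    have hcop : Nat.Coprime (p ^ (a + 1)) (k / p ^ a) :=
      Nat.Coprime.pow_left _ (Nat.coprime_ordCompl hp hk0)
    have hpow2e : p ^ (2 * e) ∣ Ln n := by rw [← hn]; exact hn_dvd
    have h1d : p ^ (a + 1) ∣ Ln n :=
      dvd_trans (pow_dvd_pow p (show a + 1 ≤ 2 * e by omega)) hpow2e
    have h2d : k / p ^ a ∣ Ln n := dvd_trans (Nat.ordCompl_dvd k p) hkdLn
    have hkp : k * p = p ^ (a + 1) * (k / p ^ a) := by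
      have hh := Nat.ordProj_mul_ordCompl_eq_self k p
      rw [pow_succ]
      calc k * p = (p ^ a * (k / p ^ a)) * p := by rw [hh]
        _ = p ^ a * p * (k / p ^ a) := by ring
    have hkpd : k * p ∣ Ln n := hkp ▸ hcop.mul_dvd_of_dvd_of_dvd h1d h2d
    obtain ⟨m, hm⟩ := hkpd
    refine ⟨m, ?_⟩
    have : Ln n = k * (p * m) := by rw [hm]; ring
    rw [this, Nat.mul_div_cancel_left _ (by omega)]
  -- the cyclotomic field
  haveI : NeZero n := ⟨hn_ne⟩
  haveI : NeZero (n : ℚ) := ⟨Nat.cast_ne_zero.mpr hn_ne⟩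
  set K := CyclotomicField n ℚ with hK
  haveI : IsCyclotomicExtension {n} ℚ K := CyclotomicField.isCyclotomicExtension n ℚ
  haveI : IsGalois ℚ K := IsCyclotomicExtension.isGalois {n} ℚ K
  haveI : FiniteDimensional ℚ K := IsCyclotomicExtension.finiteDimensional {n} ℚ K
  have hζK : IsPrimitiveRoot (IsCyclotomicExtension.zeta n ℚ K) n :=
    IsCyclotomicExtension.zeta_spec n ℚ K
  set s : Finset K := (nthRootsFinset n (1 : K)).erase 1 with hs
  set q : K := ∏ θ ∈ s, aeval θ (Ftilde n) with hq
  -- each factor decomposes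
  have key : ∀ θ ∈ s, ∃ u ∈ integralClosure ℤ K,
      aeval θ (Ftilde n) = (c : K) + (p : K) * u := by
    intro θ hθs
    obtain ⟨hne1, hmem⟩ := Finset.mem_erase.mp hθs
    have hθn : θ ^ n = 1 := (mem_nthRootsFinset npos 1).mp hmem
    have hθint : θ ∈ integralClosure ℤ K := by
      refine ⟨X ^ n - 1, monic_X_pow_sub_C 1 hn_ne, ?_⟩
      simp only [eval₂_sub, eval₂_X_pow, eval₂_one, hθn, sub_self]
    refine ⟨((Ln n / p : ℕ) : K) +
      ∑ k ∈ (Finset.Icc 1 n).erase n, ((Ln n / k / p : ℕ) : K) * θ ^ k, ?_, ?_⟩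
    · refine Subalgebra.add_mem _ (Subalgebra.natCast_mem _ _) (Subalgebra.sum_mem _ ?_)
      intro k _
      exact Subalgebra.mul_mem _ (Subalgebra.natCast_mem _ _) (Subalgebra.pow_mem _ hθint k)
    · rw [eval_Ftilde npos hθn]
      congr 1
      rw [mul_add, Finset.mul_sum]
      congr 1
      · rw [← Nat.cast_mul, Nat.mul_div_cancel' hpLn]
      · refine Finset.sum_congr rfl fun k hk => ?_
        obtain ⟨hkn, hkI⟩ := Finset.mem_erase.mp hk
        obtain ⟨hk1, hk2⟩ := Finset.mem_Icc.mp hkI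
        have hklt : k < n := lt_of_le_of_ne hk2 hkn
        rw [← mul_assoc, ← Nat.cast_mul, Nat.mul_div_cancel' (hdiv_k k hk1 hklt)]
  -- q is fixed by the Galois group
  have hmaps : ∀ σ : K ≃ₐ[ℚ] K, ∀ θ ∈ s, σ θ ∈ s := by
    intro σ θ hθ
    obtain ⟨h1, h2⟩ := Finset.mem_erase.mp hθ
    refine Finset.mem_erase.mpr ⟨?_, ?_⟩
    · intro hcontr
      exact h1 (σ.injective (by rw [hcontr, map_one]))
    · rw [mem_nthRootsFinset npos] at h2 ⊢
      rw [← map_pow, h2, map_one]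
  have hq_fixed : ∀ σ : K ≃ₐ[ℚ] K, σ q = q := by
    intro σ
    rw [hq, map_prod]
    refine Finset.prod_bij (fun θ _ => σ θ) (fun θ hθ => hmaps σ θ hθ)
      (fun a _ b _ hab => σ.injective hab)
      (fun y hy => ⟨σ.symm y, hmaps σ.symm y hy, by simp⟩) ?_
    intro θ hθ
    exact (aeval_algHom_apply (σ : K →ₐ[ℚ] K) θ (Ftilde n)).symm
  -- q is rational
  have hbot : IntermediateField.fixedField (⊤ : Subgroup (K ≃ₐ[ℚ] K)) = ⊥ :=
    OrderIso.map_bot (@IsGalois.intermediateFieldEquivSubgroup ℚ _ K _ _ _ _).symm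
  have hqbot : q ∈ (⊥ : IntermediateField ℚ K) := by
    rw [← hbot]
    rintro ⟨σ, -⟩
    exact hq_fixed σ
  obtain ⟨r, hr⟩ := IntermediateField.mem_bot.mp hqbot
  -- decompose the product
  obtain ⟨w, hw, hq_eq⟩ := prod_decomp c p s _ key
  rw [← hq] at hq_eq
  have hpK : (p : K) ≠ 0 := Nat.cast_ne_zero.mpr (by omega)
  have hpQ : (p : ℚ) ≠ 0 := Nat.cast_ne_zero.mpr (by omega)
  have hw_eq : w = algebraMap ℚ K ((r - (c : ℚ) ^ s.card) / p) := by
    have h1 : (p : K) * w = algebraMap ℚ K r - (c : K) ^ s.card := by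
      rw [hr, hq_eq]; ring
    rw [map_div₀, map_sub, map_pow, map_natCast, map_natCast, ← h1,
      mul_comm, mul_div_assoc, div_self hpK, mul_one]
  have hwint : IsIntegral ℤ ((r - (c : ℚ) ^ s.card) / p) := by
    have h1 : IsIntegral ℤ w := hw
    rw [hw_eq] at h1
    exact (isIntegral_algebraMap_iff (algebraMap ℚ K).injective).mp h1
  obtain ⟨w', hw'⟩ := IsIntegrallyClosed.isIntegral_iff.mp hwint
  have hr_eq : r = (c : ℚ) ^ s.card + p * w' := by
    have : (w' : ℚ) = (r - (c : ℚ) ^ s.card) / p := hw'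
    field_simp at this
    linarith [this]
  refine ⟨(c : ℤ) ^ s.card + p * w', ?_, ?_⟩
  · -- equals P n
    haveI : Algebra.IsAlgebraic ℚ K := Algebra.IsAlgebraic.of_finite ℚ K
    set φ : K →ₐ[ℚ] ℂ := IsAlgClosed.lift with hφ
    have φinj : Function.Injective φ := φ.toRingHom.injective
    have hζC : IsPrimitiveRoot (Complex.exp (2 * Real.pi * Complex.I / n)) n :=
      Complex.isPrimitiveRoot_exp n hn_ne
    have hφS : (nthRootsFinset n (1 : K)).image φ = nthRootsFinset n (1 : ℂ) := by
      apply Finset.eq_of_subset_of_card_le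
      · intro x hx
        obtain ⟨θ, hθ, rfl⟩ := Finset.mem_image.mp hx
        rw [mem_nthRootsFinset npos] at hθ ⊢
        rw [← map_pow, hθ, map_one]
      · rw [Finset.card_image_of_injective _ φinj,
          hζC.card_nthRootsFinset, hζK.card_nthRootsFinset]
    have hφs : s.image φ = (nthRootsFinset n (1 : ℂ)).erase 1 := by
      rw [hs, Finset.image_erase φinj, hφS, map_one]
    have hPq : P n = φ q := by
      rw [P, ← hφs, Finset.prod_image fun a _ b _ hab => φinj hab, hq, map_prod]
      exact Finset.prod_congr rfl fun θ _ => aeval_algHom_apply φ θ (Ftilde n)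
    rw [hPq, ← hr, AlgHom.commutes, eq_ratCast (algebraMap ℚ ℂ) r, hr_eq]
    push_cast
    ring
  · -- coprime
    have hprime : Prime (p : ℤ) := Nat.prime_iff_prime_int.mp hp
    refine (hprime.coprime_iff_not_dvd.mpr ?_).symm
    intro hdvd
    have h1 : (p : ℤ) ∣ (c : ℤ) ^ s.card := by
      have : (p : ℤ) ∣ ((c : ℤ) ^ s.card + p * w') - p * w' := by
        exact dvd_sub hdvd ⟨w', rfl⟩
      simpa using this
    have h2 : (p : ℤ) ∣ (c : ℤ) := hprime.dvd_of_dvd_pow h1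
    exact hpc (Int.natCast_dvd_natCast.mp h2)
end
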